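/- Assume: ‖(dH)_x v‖ ≤ l₀ e^{−n₀(λ−δ₂)} ‖v‖ for all v ∈ E^u_x; ‖(dH)_y v‖ ≤ l₀ e^{−n₀(λ−δ₂)} ‖v‖ for all v ∈ E^u_y; and ‖(dH)_y w‖ ≥ l₀^{−1} e^{−n₀(δ₀+δ₂)} ‖w‖ for all w ∈ E^{cs}_y. Then for every unit vector v ∈ E^u_x, writing v = v̂ + v^s with v̂ ∈ E^u_y and v^s ∈ E^{cs}_y, one has ‖v^s‖ ≤ (l₀² + l₀³) e^{−n₀(λ − 2δ₂ − δ₀)} + l₀ e^{n₀(δ₀+δ₂)} · C_{n₀} · ‖x − y‖, where C_{n₀} = n₀ l₀^{2n₀} e^{(2n₀² + n₀)δ₂}. -/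

import Mathlib

noncomputable section

/-- The composition `H_n = h_{n-1} ∘ ⋯ ∘ h_0`. -/
def compSeq {d : ℕ} (h : ℕ → EuclideanSpace ℝ (Fin d) → EuclideanSpace ℝ (Fin d)) :
    ℕ → EuclideanSpace ℝ (Fin d) → EuclideanSpace ℝ (Fin d)
  | 0 => id
  | n + 1 => (h n) ∘ (compSeq h n)

namespace UnstableAux

variable {d : ℕ}

/-- Candidate derivative of `compSeq h n` at `z`. -/
def Aseq (h : ℕ → EuclideanSpace ℝ (Fin d) → EuclideanSpace ℝ (Fin d))
    (Dh : ℕ → EuclideanSpace ℝ (Fin d) →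
      (EuclideanSpace ℝ (Fin d) →L[ℝ] EuclideanSpace ℝ (Fin d))) :
    ℕ → EuclideanSpace ℝ (Fin d) → (EuclideanSpace ℝ (Fin d) →L[ℝ] EuclideanSpace ℝ (Fin d))
  | 0, _ => ContinuousLinearMap.id ℝ _
  | n + 1, z => (Dh n (compSeq h n z)).comp (Aseq h Dh n z)

variable (δ2 l0 : ℝ) (n0 : ℕ)
  (h : ℕ → EuclideanSpace ℝ (Fin d) → EuclideanSpace ℝ (Fin d))
  (Dh : ℕ → EuclideanSpace ℝ (Fin d) →
    (EuclideanSpace ℝ (Fin d) →L[ℝ] EuclideanSpace ℝ (Fin d)))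

theorem Aseq_deriv (hderiv : ∀ i < n0, ∀ z, HasFDerivAt (h i) (Dh i z) z) :
    ∀ n ≤ n0, ∀ z, HasFDerivAt (compSeq h n) (Aseq h Dh n z) z := by
  intro n
  induction n with
  | zero => intro _ z; simpa [compSeq, Aseq] using hasFDerivAt_id z
  | succ n ih =>
    intro hn z
    have h1 : n < n0 := hn
    have h2 : n ≤ n0 := le_of_lt h1
    have := (hderiv n h1 (compSeq h n z)).comp z (ih h2 z)
    simpa [compSeq, Aseq] using this

theorem Aseq_norm (hδ2 : 0 ≤ δ2) (hl0 : 1 ≤ l0)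
    (hbound : ∀ i < n0, ∀ z, ‖Dh i z‖ ≤ Real.exp ((i : ℝ) * δ2) * l0) :
    ∀ n ≤ n0, ∀ z, ‖Aseq h Dh n z‖ ≤ l0 ^ n * Real.exp ((n : ℝ) ^ 2 * δ2) := by
  intro n
  induction n with
  | zero =>
    intro _ z
    refine le_trans (show ‖Aseq h Dh 0 z‖ ≤ 1 from ContinuousLinearMap.norm_id_le) ?_
    norm_num
  | succ n ih =>
    intro hn z
    have h1 : n < n0 := hn
    have h2 : n ≤ n0 := le_of_lt h1
    have hl0' : (0:ℝ) ≤ l0 := le_trans zero_le_one hl0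
    calc ‖Aseq h Dh (n+1) z‖
        ≤ ‖Dh n (compSeq h n z)‖ * ‖Aseq h Dh n z‖ :=
          ContinuousLinearMap.opNorm_comp_le _ _
      _ ≤ (Real.exp ((n : ℝ) * δ2) * l0) * (l0 ^ n * Real.exp ((n : ℝ) ^ 2 * δ2)) := by
          apply mul_le_mul (hbound n h1 _) (ih h2 z) (norm_nonneg _)
          positivity
      _ = l0 ^ (n+1) * Real.exp (((n : ℝ) ^ 2 + n) * δ2) := by
          rw [add_mul, Real.exp_add]; ring
      _ ≤ l0 ^ (n+1) * Real.exp (((n : ℝ) + 1) ^ 2 * δ2) := by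
          gcongr
          nlinarith [hδ2, Nat.cast_nonneg (α := ℝ) n]
      _ = l0 ^ (n+1) * Real.exp (((n+1 : ℕ) : ℝ) ^ 2 * δ2) := by push_cast; ring

theorem compSeq_lip (hδ2 : 0 ≤ δ2) (hl0 : 1 ≤ l0)
    (hderiv : ∀ i < n0, ∀ z, HasFDerivAt (h i) (Dh i z) z)
    (hbound : ∀ i < n0, ∀ z, ‖Dh i z‖ ≤ Real.exp ((i : ℝ) * δ2) * l0) :
    ∀ n ≤ n0, ∀ a b : EuclideanSpace ℝ (Fin d),
      ‖compSeq h n a - compSeq h n b‖ ≤ l0 ^ n * Real.exp ((n : ℝ) ^ 2 * δ2) * ‖a - b‖ := by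
  intro n
  induction n with
  | zero => intro _ a b; simp [compSeq]
  | succ n ih =>
    intro hn a b
    have h1 : n < n0 := hn
    have h2 : n ≤ n0 := le_of_lt h1
    have hl0' : (0:ℝ) ≤ l0 := le_trans zero_le_one hl0
    have hi : ∀ u w : EuclideanSpace ℝ (Fin d),
        ‖h n u - h n w‖ ≤ (Real.exp ((n : ℝ) * δ2) * l0) * ‖u - w‖ := by
      intro u w
      refine Convex.norm_image_sub_le_of_norm_hasFDerivWithin_le
        (fun z _ => ((hderiv n h1 z).hasFDerivWithinAt))
        (fun z _ => hbound n h1 z) convex_univ (Set.mem_univ w) (Set.mem_univ u)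
    calc ‖compSeq h (n+1) a - compSeq h (n+1) b‖
        = ‖h n (compSeq h n a) - h n (compSeq h n b)‖ := by simp [compSeq]
      _ ≤ (Real.exp ((n : ℝ) * δ2) * l0) * ‖compSeq h n a - compSeq h n b‖ := hi _ _
      _ ≤ (Real.exp ((n : ℝ) * δ2) * l0) *
            (l0 ^ n * Real.exp ((n : ℝ) ^ 2 * δ2) * ‖a - b‖) := by
          apply mul_le_mul_of_nonneg_left (ih h2 a b); positivity
      _ = l0 ^ (n+1) * Real.exp (((n : ℝ) ^ 2 + n) * δ2) * ‖a - b‖ := by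
          rw [add_mul, Real.exp_add]; ring
      _ ≤ l0 ^ (n+1) * Real.exp (((n : ℝ) + 1) ^ 2 * δ2) * ‖a - b‖ := by
          gcongr
          nlinarith [hδ2, Nat.cast_nonneg (α := ℝ) n]
      _ = l0 ^ (n+1) * Real.exp (((n+1 : ℕ) : ℝ) ^ 2 * δ2) * ‖a - b‖ := by push_cast; ring

theorem Aseq_diff (hδ2 : 0 ≤ δ2) (hl0 : 1 ≤ l0)
    (hderiv : ∀ i < n0, ∀ z, HasFDerivAt (h i) (Dh i z) z)
    (hbound : ∀ i < n0, ∀ z, ‖Dh i z‖ ≤ Real.exp ((i : ℝ) * δ2) * l0)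
    (hlip : ∀ i < n0, LipschitzWith (Real.exp ((i : ℝ) * δ2) * l0).toNNReal (Dh i))
    (x y : EuclideanSpace ℝ (Fin d)) :
    ∀ n ≤ n0, ‖Aseq h Dh n x - Aseq h Dh n y‖ ≤
      (n : ℝ) * l0 ^ (2 * n) * Real.exp ((2 * (n : ℝ) ^ 2 + n) * δ2) * ‖x - y‖ := by
  intro n
  induction n with
  | zero =>
    intro _
    rw [show Aseq h Dh 0 x - Aseq h Dh 0 y = 0 from sub_self _, norm_zero]
    positivity
  | succ n ih =>
    intro hn
    have h1 : n < n0 := hn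
    have h2 : n ≤ n0 := le_of_lt h1
    have hl0' : (0:ℝ) ≤ l0 := le_trans zero_le_one hl0
    have hC : (0:ℝ) ≤ Real.exp ((n : ℝ) * δ2) * l0 := by positivity
    -- Lipschitz bound on Dh n in real norm form
    have hlipR : ‖Dh n (compSeq h n x) - Dh n (compSeq h n y)‖ ≤
        (Real.exp ((n : ℝ) * δ2) * l0) * ‖compSeq h n x - compSeq h n y‖ := by
      have := (hlip n h1).dist_le_mul (compSeq h n x) (compSeq h n y)
      rw [dist_eq_norm, dist_eq_norm] at this
      calc ‖Dh n (compSeq h n x) - Dh n (compSeq h n y)‖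
          ≤ (Real.toNNReal (Real.exp ((n : ℝ) * δ2) * l0) : ℝ) *
              ‖compSeq h n x - compSeq h n y‖ := this
        _ = (Real.exp ((n : ℝ) * δ2) * l0) * ‖compSeq h n x - compSeq h n y‖ := by
            rw [Real.coe_toNNReal _ hC]
    have hsplit : Aseq h Dh (n+1) x - Aseq h Dh (n+1) y =
        (Dh n (compSeq h n x)).comp (Aseq h Dh n x - Aseq h Dh n y) +
        (Dh n (compSeq h n x) - Dh n (compSeq h n y)).comp (Aseq h Dh n y) := by
      simp only [Aseq, ContinuousLinearMap.comp_sub, ContinuousLinearMap.sub_comp]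
      abel
    have hAy := Aseq_norm δ2 l0 n0 h Dh hδ2 hl0 hbound n h2 y
    have hHlip := compSeq_lip δ2 l0 n0 h Dh hδ2 hl0 hderiv hbound n h2 x y
    calc ‖Aseq h Dh (n+1) x - Aseq h Dh (n+1) y‖
        ≤ ‖Dh n (compSeq h n x)‖ * ‖Aseq h Dh n x - Aseq h Dh n y‖ +
          ‖Dh n (compSeq h n x) - Dh n (compSeq h n y)‖ * ‖Aseq h Dh n y‖ := by
          rw [hsplit]
          exact le_trans (norm_add_le _ _)
            (add_le_add (ContinuousLinearMap.opNorm_comp_le _ _)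
              (ContinuousLinearMap.opNorm_comp_le _ _))
      _ ≤ (Real.exp ((n : ℝ) * δ2) * l0) *
            ((n : ℝ) * l0 ^ (2 * n) * Real.exp ((2 * (n : ℝ) ^ 2 + n) * δ2) * ‖x - y‖) +
          ((Real.exp ((n : ℝ) * δ2) * l0) *
            (l0 ^ n * Real.exp ((n : ℝ) ^ 2 * δ2) * ‖x - y‖)) *
            (l0 ^ n * Real.exp ((n : ℝ) ^ 2 * δ2)) := by
          apply add_le_add
          · exact mul_le_mul (hbound n h1 _) (ih h2) (norm_nonneg _) hC
          · apply mul_le_mul _ hAy (norm_nonneg _) (by positivity)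
            exact le_trans hlipR (mul_le_mul_of_nonneg_left hHlip hC)
      _ = ((n : ℝ) * l0 ^ (2 * n + 1) * Real.exp ((2 * (n : ℝ) ^ 2 + 2 * n) * δ2) +
            l0 ^ (2 * n + 1) * Real.exp ((2 * (n : ℝ) ^ 2 + n) * δ2)) * ‖x - y‖ := by
          have hab : Real.exp ((2 * (n : ℝ) ^ 2 + 2 * n) * δ2) =
              Real.exp ((n : ℝ) * δ2) * Real.exp ((2 * (n : ℝ) ^ 2 + n) * δ2) := by
            rw [← Real.exp_add]; congr 1; ring
          have hc : Real.exp ((2 * (n : ℝ) ^ 2 + n) * δ2) =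
              Real.exp ((n : ℝ) * δ2) *
                (Real.exp ((n : ℝ) ^ 2 * δ2) * Real.exp ((n : ℝ) ^ 2 * δ2)) := by
            rw [← Real.exp_add, ← Real.exp_add]; congr 1; ring
          rw [hab, hc]
          ring
      _ ≤ (((n : ℝ) + 1) * l0 ^ (2 * (n + 1)) *
            Real.exp ((2 * ((n : ℝ) + 1) ^ 2 + ((n : ℝ) + 1)) * δ2)) * ‖x - y‖ := by
          have e1 : Real.exp ((2 * (n : ℝ) ^ 2 + 2 * n) * δ2) ≤
              Real.exp ((2 * ((n : ℝ) + 1) ^ 2 + ((n : ℝ) + 1)) * δ2) := by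
            apply Real.exp_le_exp.mpr; nlinarith [hδ2]
          have e2 : Real.exp ((2 * (n : ℝ) ^ 2 + n) * δ2) ≤
              Real.exp ((2 * ((n : ℝ) + 1) ^ 2 + ((n : ℝ) + 1)) * δ2) := by
            apply Real.exp_le_exp.mpr; nlinarith [hδ2]
          have p1 : l0 ^ (2 * n + 1) ≤ l0 ^ (2 * (n + 1)) :=
            pow_le_pow_right₀ hl0 (by omega)
          have hn' : (0:ℝ) ≤ (n : ℝ) := Nat.cast_nonneg n
          apply mul_le_mul_of_nonneg_right _ (norm_nonneg _)
          have t1 : (n : ℝ) * l0 ^ (2 * n + 1) * Real.exp ((2 * (n : ℝ) ^ 2 + 2 * n) * δ2) ≤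
              (n : ℝ) * l0 ^ (2 * (n + 1)) *
                Real.exp ((2 * ((n : ℝ) + 1) ^ 2 + ((n : ℝ) + 1)) * δ2) := by
            apply mul_le_mul (mul_le_mul_of_nonneg_left p1 hn') e1 (by positivity)
              (by positivity)
          have t2 : l0 ^ (2 * n + 1) * Real.exp ((2 * (n : ℝ) ^ 2 + n) * δ2) ≤
              l0 ^ (2 * (n + 1)) *
                Real.exp ((2 * ((n : ℝ) + 1) ^ 2 + ((n : ℝ) + 1)) * δ2) := by
            apply mul_le_mul p1 e2 (by positivity) (by positivity)
          calc (n : ℝ) * l0 ^ (2 * n + 1) * Real.exp ((2 * (n : ℝ) ^ 2 + 2 * n) * δ2) +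
              l0 ^ (2 * n + 1) * Real.exp ((2 * (n : ℝ) ^ 2 + n) * δ2)
              ≤ (n : ℝ) * l0 ^ (2 * (n + 1)) *
                  Real.exp ((2 * ((n : ℝ) + 1) ^ 2 + ((n : ℝ) + 1)) * δ2) +
                l0 ^ (2 * (n + 1)) *
                  Real.exp ((2 * ((n : ℝ) + 1) ^ 2 + ((n : ℝ) + 1)) * δ2) :=
                add_le_add t1 t2
            _ = ((n : ℝ) + 1) * l0 ^ (2 * (n + 1)) *
                  Real.exp ((2 * ((n : ℝ) + 1) ^ 2 + ((n : ℝ) + 1)) * δ2) := by ring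
      _ = _ := by push_cast; ring

end UnstableAux

open UnstableAux in
/-- Quantitative continuity of unstable subspaces for orbits sharing a finite past
(the estimate in the proof of Proposition 2.3(b)): if the backward composition `H`
contracts `E^u_x` and `E^u_y` and expands no worse than `l₀⁻¹ e^{-n₀(δ₀+δ₂)}` on
`E^{cs}_y`, then the `E^{cs}_y`-component `v^s = v - π^u_y v` of any unit vector
`v ∈ E^u_x` satisfies the stated bound. -/
theorem unstable_subspace_continuity_estimate
    (d : ℕ) (hd : 1 ≤ d) (lam δ0 δ2 l0 : ℝ) (n0 : ℕ)
    (hlam : 0 < lam) (hδ0 : 0 ≤ δ0) (hδ2 : 0 ≤ δ2) (hl0 : 1 ≤ l0) (hn0 : 1 ≤ n0)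
    (h : ℕ → EuclideanSpace ℝ (Fin d) → EuclideanSpace ℝ (Fin d))
    (Dh : ℕ → EuclideanSpace ℝ (Fin d) →
      (EuclideanSpace ℝ (Fin d) →L[ℝ] EuclideanSpace ℝ (Fin d)))
    (hderiv : ∀ i < n0, ∀ z, HasFDerivAt (h i) (Dh i z) z)
    (hbound : ∀ i < n0, ∀ z, ‖Dh i z‖ ≤ Real.exp ((i : ℝ) * δ2) * l0)
    (hlip : ∀ i < n0, LipschitzWith (Real.exp ((i : ℝ) * δ2) * l0).toNNReal (Dh i))
    (x y : EuclideanSpace ℝ (Fin d))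
    (Eux Euy Ecsy : Submodule ℝ (EuclideanSpace ℝ (Fin d)))
    (hcompl : IsCompl Euy Ecsy)
    (πuy : EuclideanSpace ℝ (Fin d) →L[ℝ] EuclideanSpace ℝ (Fin d))
    (hπ1 : ∀ v ∈ Euy, πuy v = v) (hπ2 : ∀ v ∈ Ecsy, πuy v = 0)
    (hπnorm : ‖πuy‖ ≤ l0)
    (DHx DHy : EuclideanSpace ℝ (Fin d) →L[ℝ] EuclideanSpace ℝ (Fin d))
    (hDHx : HasFDerivAt (compSeq h n0) DHx x)
    (hDHy : HasFDerivAt (compSeq h n0) DHy y)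
    (hux : ∀ v ∈ Eux, ‖DHx v‖ ≤ l0 * Real.exp (-((n0 : ℝ) * (lam - δ2))) * ‖v‖)
    (huy : ∀ v ∈ Euy, ‖DHy v‖ ≤ l0 * Real.exp (-((n0 : ℝ) * (lam - δ2))) * ‖v‖)
    (hcsy : ∀ w ∈ Ecsy, l0⁻¹ * Real.exp (-((n0 : ℝ) * (δ0 + δ2))) * ‖w‖ ≤ ‖DHy w‖) :
    ∀ v ∈ Eux, ‖v‖ = 1 →
      ‖v - πuy v‖ ≤
        (l0 ^ 2 + l0 ^ 3) * Real.exp (-((n0 : ℝ) * (lam - 2 * δ2 - δ0))) +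
        l0 * Real.exp ((n0 : ℝ) * (δ0 + δ2)) *
          ((n0 : ℝ) * l0 ^ (2 * n0) * Real.exp (((2 * n0 ^ 2 + n0 : ℕ) : ℝ) * δ2)) *
          ‖x - y‖ := by
  intro v hv hv1
  have hl0pos : (0:ℝ) < l0 := lt_of_lt_of_le zero_lt_one hl0
  -- identify the derivatives
  have hDHx' : DHx = Aseq h Dh n0 x :=
    hDHx.unique (Aseq_deriv n0 h Dh hderiv n0 le_rfl x)
  have hDHy' : DHy = Aseq h Dh n0 y :=
    hDHy.unique (Aseq_deriv n0 h Dh hderiv n0 le_rfl y)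
  have hDdiff : ‖DHx - DHy‖ ≤
      (n0 : ℝ) * l0 ^ (2 * n0) * Real.exp ((2 * (n0 : ℝ) ^ 2 + n0) * δ2) * ‖x - y‖ := by
    rw [hDHx', hDHy']
    exact Aseq_diff δ2 l0 n0 h Dh hδ2 hl0 hderiv hbound hlip x y n0 le_rfl
  -- decompose v
  have hmem : v ∈ Euy ⊔ Ecsy := by rw [hcompl.sup_eq_top]; trivial
  obtain ⟨a, ha, b, hb, hab⟩ := Submodule.mem_sup.mp hmem
  have hπv : πuy v = a := by
    rw [← hab, map_add, hπ1 a ha, hπ2 b hb, add_zero]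
  have hvs : v - πuy v = b := by rw [hπv, ← hab]; abel
  rw [hvs]
  -- norm bounds
  have hanorm : ‖a‖ ≤ l0 := by
    rw [← hπv]
    calc ‖πuy v‖ ≤ ‖πuy‖ * ‖v‖ := πuy.le_opNorm v
      _ ≤ l0 := by rw [hv1, mul_one]; exact hπnorm
  have hDb : ‖DHy b‖ ≤ ‖DHy v‖ + ‖DHy a‖ := by
    have : DHy b = DHy v - DHy a := by rw [← hab, map_add]; abel
    rw [this]; exact norm_sub_le _ _
  have hDv : ‖DHy v‖ ≤ l0 * Real.exp (-((n0 : ℝ) * (lam - δ2))) + ‖DHx - DHy‖ := by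
    calc ‖DHy v‖ = ‖DHx v - (DHx - DHy) v‖ := by
          congr 1
          simp [ContinuousLinearMap.sub_apply]
      _ ≤ ‖DHx v‖ + ‖(DHx - DHy) v‖ := norm_sub_le _ _
      _ ≤ l0 * Real.exp (-((n0 : ℝ) * (lam - δ2))) * ‖v‖ + ‖DHx - DHy‖ * ‖v‖ :=
          add_le_add (hux v hv) ((DHx - DHy).le_opNorm v)
      _ = l0 * Real.exp (-((n0 : ℝ) * (lam - δ2))) + ‖DHx - DHy‖ := by
          rw [hv1, mul_one, mul_one]
  have hDa : ‖DHy a‖ ≤ l0 ^ 2 * Real.exp (-((n0 : ℝ) * (lam - δ2))) := by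
    calc ‖DHy a‖ ≤ l0 * Real.exp (-((n0 : ℝ) * (lam - δ2))) * ‖a‖ := huy a ha
      _ ≤ l0 * Real.exp (-((n0 : ℝ) * (lam - δ2))) * l0 := by
          apply mul_le_mul_of_nonneg_left hanorm; positivity
      _ = l0 ^ 2 * Real.exp (-((n0 : ℝ) * (lam - δ2))) := by ring
  have hbkey : ‖b‖ ≤ l0 * Real.exp ((n0 : ℝ) * (δ0 + δ2)) * ‖DHy b‖ := by
    have hc := hcsy b hb
    have hone : l0 * Real.exp ((n0 : ℝ) * (δ0 + δ2)) *
        (l0⁻¹ * Real.exp (-((n0 : ℝ) * (δ0 + δ2)))) = 1 := by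
      have h2 : Real.exp ((n0 : ℝ) * (δ0 + δ2)) *
          Real.exp (-((n0 : ℝ) * (δ0 + δ2))) = 1 := by
        rw [← Real.exp_add]; simp
      calc l0 * Real.exp ((n0 : ℝ) * (δ0 + δ2)) *
            (l0⁻¹ * Real.exp (-((n0 : ℝ) * (δ0 + δ2))))
          = (l0 * l0⁻¹) * (Real.exp ((n0 : ℝ) * (δ0 + δ2)) *
              Real.exp (-((n0 : ℝ) * (δ0 + δ2)))) := by ring
        _ = 1 := by rw [mul_inv_cancel₀ (ne_of_gt hl0pos), h2, mul_one]
    calc ‖b‖ = l0 * Real.exp ((n0 : ℝ) * (δ0 + δ2)) *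
          (l0⁻¹ * Real.exp (-((n0 : ℝ) * (δ0 + δ2))) * ‖b‖) := by
          rw [← mul_assoc, hone, one_mul]
      _ ≤ l0 * Real.exp ((n0 : ℝ) * (δ0 + δ2)) * ‖DHy b‖ := by
          apply mul_le_mul_of_nonneg_left hc; positivity
  -- combine
  have hexp : Real.exp ((n0 : ℝ) * (δ0 + δ2)) * Real.exp (-((n0 : ℝ) * (lam - δ2))) =
      Real.exp (-((n0 : ℝ) * (lam - 2 * δ2 - δ0))) := by
    rw [← Real.exp_add]; congr 1; ring
  calc ‖b‖ ≤ l0 * Real.exp ((n0 : ℝ) * (δ0 + δ2)) * ‖DHy b‖ := hbkey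
    _ ≤ l0 * Real.exp ((n0 : ℝ) * (δ0 + δ2)) *
        ((l0 * Real.exp (-((n0 : ℝ) * (lam - δ2))) + ‖DHx - DHy‖) +
          l0 ^ 2 * Real.exp (-((n0 : ℝ) * (lam - δ2)))) := by
        apply mul_le_mul_of_nonneg_left (le_trans hDb (add_le_add hDv hDa))
        positivity
    _ ≤ l0 * Real.exp ((n0 : ℝ) * (δ0 + δ2)) *
        ((l0 * Real.exp (-((n0 : ℝ) * (lam - δ2))) +
            (n0 : ℝ) * l0 ^ (2 * n0) * Real.exp ((2 * (n0 : ℝ) ^ 2 + n0) * δ2) * ‖x - y‖) +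
          l0 ^ 2 * Real.exp (-((n0 : ℝ) * (lam - δ2)))) := by
        apply mul_le_mul_of_nonneg_left _ (by positivity)
        apply add_le_add_left (add_le_add_right hDdiff _)
    _ = (l0 ^ 2 + l0 ^ 3) *
          (Real.exp ((n0 : ℝ) * (δ0 + δ2)) * Real.exp (-((n0 : ℝ) * (lam - δ2)))) +
        l0 * Real.exp ((n0 : ℝ) * (δ0 + δ2)) *
          ((n0 : ℝ) * l0 ^ (2 * n0) * Real.exp ((2 * (n0 : ℝ) ^ 2 + n0) * δ2)) *
          ‖x - y‖ := by ring
    _ = (l0 ^ 2 + l0 ^ 3) * Real.exp (-((n0 : ℝ) * (lam - 2 * δ2 - δ0))) +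
        l0 * Real.exp ((n0 : ℝ) * (δ0 + δ2)) *
          ((n0 : ℝ) * l0 ^ (2 * n0) * Real.exp (((2 * n0 ^ 2 + n0 : ℕ) : ℝ) * δ2)) *
          ‖x - y‖ := by
        rw [hexp]
        congr 3
        push_cast
        ring
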